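/- Let p be an odd prime, L = GL(3, F_p), let g1 be the matrix with rows (1,1,0), (0,1,0), (0,0,1), and let L act on the right on row vectors in F_p^3, via v ↦ v·M. Let W = {(0, a, b) : a, b in F_p}, the 2-dimensional subspace of row vectors with first coordinate zero (which g1 fixes pointwise). Let Ω be the set of all x in L such that: x commutes with g1; x is not the identity matrix; x^(p−1) is the identity (the order of x divides p − 1); and x moves every affine coset v + W with v not in W, i.e. for every row vector v in F_p^3 with v not in W one has v·x − v not in W. Then the cardinality of Ω is (p − 2)·(p − 1)·(p^2 − p − 1). -/

import Mathlib

open Matrix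

section Aux

variable {p : ℕ} [Fact p.Prime]

private lemma powA' (a b c e f : ZMod p) (hfa : f ≠ a) (n : ℕ) :
    (!![a,b,c;0,a,0;0,e,f]) ^ (n+1) =
    !![a^(n+1),
       (n+1)*b*a^n + c*e*(((f^(n+1)-a^(n+1))*(f-a)⁻¹ - (n+1)*a^n)*(f-a)⁻¹),
       c*((f^(n+1)-a^(n+1))*(f-a)⁻¹);
       0, a^(n+1), 0;
       0, e*((f^(n+1)-a^(n+1))*(f-a)⁻¹), f^(n+1)] := by
  have hfa' : f - a ≠ 0 := sub_ne_zero.mpr hfa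
  induction n with
  | zero =>
    rw [pow_one]
    ext i j
    fin_cases i <;> fin_cases j <;> simp <;> field_simp <;> simp
  | succ n ih =>
    rw [pow_succ, ih, Matrix.mul_fin_three]
    ext i j
    fin_cases i <;> fin_cases j <;> simp <;> (try field_simp) <;> ring_nf

private lemma powB' (a b c e : ZMod p) (h2 : (2 : ZMod p) ≠ 0) (ha : a ≠ 0) (n : ℕ) :
    (!![a,b,c;0,a,0;0,e,a]) ^ (n+1) =
    !![a^(n+1), (n+1)*b*a^n + c*e*((n*(n+1) : ℕ))*2⁻¹*(a^n*a⁻¹), (n+1)*c*a^n;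
       0, a^(n+1), 0;
       0, (n+1)*e*a^n, a^(n+1)] := by
  induction n with
  | zero =>
    rw [pow_one]
    ext i j
    fin_cases i <;> fin_cases j <;> simp
  | succ n ih =>
    rw [pow_succ, ih, Matrix.mul_fin_three]
    ext i j
    fin_cases i <;> fin_cases j <;> simp [pow_succ]
    · field_simp; ring
    · ring
    · ring

private lemma lit_eq_iff {α : Type*} {x00 x01 x02 x10 x11 x12 x20 x21 x22
    y00 y01 y02 y10 y11 y12 y20 y21 y22 : α} :
    !![x00,x01,x02;x10,x11,x12;x20,x21,x22] = !![y00,y01,y02;y10,y11,y12;y20,y21,y22] ↔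
    (x00=y00 ∧ x01=y01 ∧ x02=y02 ∧ x10=y10 ∧ x11=y11 ∧ x12=y12 ∧ x20=y20 ∧ x21=y21 ∧ x22=y22) := by
  constructor
  · intro h
    have h' := Matrix.ext_iff.mpr h
    exact ⟨by simpa using h' 0 0, by simpa using h' 0 1, by simpa using h' 0 2,
      by simpa using h' 1 0, by simpa using h' 1 1, by simpa using h' 1 2,
      by simpa using h' 2 0, by simpa using h' 2 1, by simpa using h' 2 2⟩
  · rintro ⟨h1,h2,h3,h4,h5,h6,h7,h8,h9⟩
    rw [h1,h2,h3,h4,h5,h6,h7,h8,h9]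

private lemma pow_iff' (hodd : p ≠ 2) (a b c e f : ZMod p) (ha : a ≠ 0) (hf : f ≠ 0) :
    (!![a,b,c;0,a,0;0,e,f]) ^ (p-1) = 1 ↔
    ((f ≠ a ∧ b*(f-a) = c*e) ∨ (f = a ∧ b = 0 ∧ c = 0 ∧ e = 0)) := by
  have hp3 : 3 ≤ p := by
    have h2 := (Fact.out : p.Prime).two_le
    omega
  have h2 : (2 : ZMod p) ≠ 0 := by
    intro h
    have h' : ((2 : ℕ) : ZMod p) = 0 := by push_cast; exact h
    rw [ZMod.natCast_eq_zero_iff] at h'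
    exact hodd ((Nat.prime_dvd_prime_iff_eq (Fact.out) (by norm_num)).mp h')
  have hn : p - 1 = (p - 2) + 1 := by omega
  have hcast : ((p-2 : ℕ) : ZMod p) = -2 := by
    rw [Nat.cast_sub (by omega), ZMod.natCast_self]
    push_cast
    ring
  have hA : a ^ (p-2) ≠ 0 := pow_ne_zero _ ha
  have apow : a ^ (p-2+1) = 1 := by rw [← hn]; exact ZMod.pow_card_sub_one_eq_one ha
  rcases eq_or_ne f a with hh | hfa
  · rw [hh]
    rw [hn, powB' a b c e h2 ha (p-2), one_fin_three, lit_eq_iff]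
    simp only [hcast, apow]
    constructor
    · rintro ⟨-, h01, h02, -, -, -, -, h21, -⟩
      have hc0 : c = 0 := by
        have h : a^(p-2) * c = 0 := by linear_combination -h02
        rcases mul_eq_zero.mp h with h' | h'
        · exact absurd h' hA
        · exact h'
      have he0 : e = 0 := by
        have h : a^(p-2) * e = 0 := by linear_combination -h21
        rcases mul_eq_zero.mp h with h' | h'
        · exact absurd h' hA
        · exact h'
      refine Or.inr ⟨trivial, ?_, hc0, he0⟩
      rw [hc0, he0] at h01
      have h : a^(p-2) * b = 0 := by linear_combination -h01
      rcases mul_eq_zero.mp h with h' | h'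
      · exact absurd h' hA
      · exact h'
    · rintro (⟨h, -⟩ | ⟨-, hb, hc, he⟩)
      · exact absurd rfl h
      · subst hb; subst hc; subst he
        exact ⟨trivial, by ring, by ring, trivial, trivial, trivial, trivial, by ring, trivial⟩
  · have fpow : f ^ (p-2+1) = 1 := by rw [← hn]; exact ZMod.pow_card_sub_one_eq_one hf
    have hfa' : f - a ≠ 0 := sub_ne_zero.mpr hfa
    rw [hn, powA' a b c e f hfa (p-2), one_fin_three, lit_eq_iff]
    simp only [hcast, apow, fpow, sub_self, zero_mul, zero_sub, neg_neg]
    constructor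
    · rintro ⟨-, h01, -, -, -, -, -, -, -⟩
      refine Or.inl ⟨hfa, ?_⟩
      field_simp at h01
      have h : a^(p-2) * (c*e - b*(f-a)) = 0 := by linear_combination h01
      rcases mul_eq_zero.mp h with h' | h'
      · exact absurd h' hA
      · linear_combination -h'
    · rintro (⟨-, hbce⟩ | ⟨h, -⟩)
      · refine ⟨trivial, ?_, by ring, trivial, trivial, trivial, trivial, by ring, trivial⟩
        field_simp
        linear_combination (-(a^(p-2))) * hbce
      · exact absurd h hfa

private lemma commute_iff' (M : Matrix (Fin 3) (Fin 3) (ZMod p)) :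
    M * !![1,1,0;0,1,0;0,0,1] = !![1,1,0;0,1,0;0,0,1] * M ↔
    (M 1 0 = 0 ∧ M 1 2 = 0 ∧ M 2 0 = 0 ∧ M 1 1 = M 0 0) := by
  constructor
  · intro h
    have h' := Matrix.ext_iff.mpr h
    have e01 := h' 0 1
    have e11 := h' 1 1
    have e21 := h' 2 1
    have e02 := h' 0 2
    simp [Matrix.mul_apply, Fin.sum_univ_three] at e01 e11 e21 e02
    exact ⟨e11, e02, e21, by linear_combination -e01⟩
  · rintro ⟨h1, h2, h3, h4⟩
    ext i j
    fin_cases i <;> fin_cases j <;>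
      simp [Matrix.mul_apply, Fin.sum_univ_three, Matrix.vecHead, Matrix.vecTail,
        h1, h2, h3, h4] <;> ring

private lemma card_ne_two' (u v : ZMod p) (huv : u ≠ v) :
    Fintype.card {x : ZMod p // x ≠ u ∧ x ≠ v} = p - 2 := by
  haveI : NeZero p := ⟨(Fact.out : p.Prime).ne_zero⟩
  rw [Fintype.card_subtype]
  have h : Finset.filter (fun x => x ≠ u ∧ x ≠ v) Finset.univ
      = Finset.univ \ {u, v} := by
    ext x
    simp [Finset.mem_sdiff]
  rw [h, Finset.card_sdiff_of_subset (Finset.subset_univ _), Finset.card_univ, ZMod.card,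
    Finset.card_insert_of_notMem (by simpa using huv), Finset.card_singleton]

end Aux

/-- The element g1 of GL(3, F_p): rows (1,1,0), (0,1,0), (0,0,1). -/
noncomputable def gOne (p : ℕ) [Fact p.Prime] : GL (Fin 3) (ZMod p) :=
  Matrix.GeneralLinearGroup.mkOfDetNeZero !![1, 1, 0; 0, 1, 0; 0, 0, 1]
    (by simp [Matrix.det_fin_three, Matrix.vecHead, Matrix.vecTail])

section Main

variable (p : ℕ) [Fact p.Prime]

private lemma gOne_coe' :
    ((gOne p : GL (Fin 3) (ZMod p)) : Matrix (Fin 3) (Fin 3) (ZMod p))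
      = !![1,1,0;0,1,0;0,0,1] := rfl

/-- The parameter type. -/
private abbrev Tpar : Type :=
  (Σ _a : {a : ZMod p // a ≠ 0 ∧ a ≠ 1},
    {f : ZMod p // f ≠ 0 ∧ f ≠ _a.1} × ZMod p × ZMod p) ⊕ {a : ZMod p // a ≠ 0 ∧ a ≠ 1}

private noncomputable def Fmap : Tpar p → GL (Fin 3) (ZMod p)
  | Sum.inl x =>
      Matrix.GeneralLinearGroup.mkOfDetNeZero
        !![x.1.1, x.2.2.1*x.2.2.2*(x.2.1.1-x.1.1)⁻¹, x.2.2.1; 0, x.1.1, 0; 0, x.2.2.2, x.2.1.1]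
        (by
          have h : (!![x.1.1, x.2.2.1*x.2.2.2*(x.2.1.1-x.1.1)⁻¹, x.2.2.1;
              0, x.1.1, 0; 0, x.2.2.2, x.2.1.1]).det = x.1.1 * x.1.1 * x.2.1.1 := by
            simp [Matrix.det_fin_three, Matrix.vecHead, Matrix.vecTail]
            try ring
          rw [h]
          exact mul_ne_zero (mul_ne_zero x.1.2.1 x.1.2.1) x.2.1.2.1)
  | Sum.inr a =>
      Matrix.GeneralLinearGroup.mkOfDetNeZero !![a.1, 0, 0; 0, a.1, 0; 0, 0, a.1]
        (by
          have h : (!![a.1, 0, 0; 0, a.1, 0; 0, 0, a.1]).det = a.1 * a.1 * a.1 := by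
            simp [Matrix.det_fin_three, Matrix.vecHead, Matrix.vecTail]
            try ring
          rw [h]
          exact mul_ne_zero (mul_ne_zero a.2.1 a.2.1) a.2.1)

private lemma Fmap_inl_val (a f c e : ZMod p) (ha : a ≠ 0 ∧ a ≠ 1) (hf : f ≠ 0 ∧ f ≠ a) :
    ((Fmap p (Sum.inl ⟨⟨a, ha⟩, ⟨f, hf⟩, c, e⟩) : GL (Fin 3) (ZMod p))
      : Matrix (Fin 3) (Fin 3) (ZMod p))
      = !![a, c*e*(f-a)⁻¹, c; 0, a, 0; 0, e, f] := rfl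

private lemma Fmap_inr_val (a : ZMod p) (ha : a ≠ 0 ∧ a ≠ 1) :
    ((Fmap p (Sum.inr ⟨a, ha⟩) : GL (Fin 3) (ZMod p)) : Matrix (Fin 3) (Fin 3) (ZMod p))
      = !![a, 0, 0; 0, a, 0; 0, 0, a] := rfl

/-- The set Ω. -/
private def Omega : Set (GL (Fin 3) (ZMod p)) :=
  {x : GL (Fin 3) (ZMod p) |
      x * gOne p = gOne p * x ∧
      x ≠ 1 ∧
      x ^ (p - 1) = 1 ∧
      ∀ v : Fin 3 → ZMod p, v 0 ≠ 0 →
        (v ᵥ* (x : Matrix (Fin 3) (Fin 3) (ZMod p)) - v) 0 ≠ 0}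

private lemma Fmap_mem (hodd : p ≠ 2) (t : Tpar p) : Fmap p t ∈ Omega p := by
  have key : ∀ (a b c e f : ZMod p), a ≠ 0 → a ≠ 1 → f ≠ 0 →
      ∀ x : GL (Fin 3) (ZMod p),
      (x : Matrix (Fin 3) (Fin 3) (ZMod p)) = !![a,b,c;0,a,0;0,e,f] →
      ((!![a,b,c;0,a,0;0,e,f] : Matrix (Fin 3) (Fin 3) (ZMod p)) ^ (p-1) = 1) →
      x ∈ Omega p := by
    intro a b c e f ha0 ha1 hf0 x hx hpow
    refine ⟨?_, ?_, ?_, ?_⟩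
    · apply Units.ext
      rw [Units.val_mul, Units.val_mul, hx, gOne_coe']
      refine (commute_iff' _).mpr ⟨by simp [Matrix.vecHead, Matrix.vecTail], by simp [Matrix.vecHead, Matrix.vecTail], by simp [Matrix.vecHead, Matrix.vecTail], by simp [Matrix.vecHead, Matrix.vecTail]⟩
    · intro h
      have h' := congrArg Units.val h
      rw [hx, Units.val_one, one_fin_three, lit_eq_iff] at h'
      exact ha1 h'.1
    · apply Units.ext
      rw [Units.val_pow_eq_pow_val, hx, Units.val_one]
      exact hpow
    · intro v hv
      have hvm : (v ᵥ* (x : Matrix (Fin 3) (Fin 3) (ZMod p))) 0 = v 0 * a := by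
        rw [hx]
        simp [Matrix.vecMul, dotProduct, Fin.sum_univ_three, Matrix.vecHead, Matrix.vecTail]
      rw [Pi.sub_apply, hvm]
      intro h
      exact (mul_ne_zero hv (sub_ne_zero.mpr ha1)) (by linear_combination h)
  rcases t with ⟨⟨a, ha0, ha1⟩, ⟨⟨f, hf0, hfa⟩, c, e⟩⟩ | ⟨a, ha0, ha1⟩
  · refine key a (c*e*(f-a)⁻¹) c e f ha0 ha1 hf0 _
      (Fmap_inl_val p a f c e ⟨ha0, ha1⟩ ⟨hf0, hfa⟩) ?_
    refine (pow_iff' hodd a _ c e f ha0 hf0).mpr (Or.inl ⟨hfa, ?_⟩)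
    exact inv_mul_cancel_right₀ (sub_ne_zero.mpr hfa) (c*e)
  · refine key a 0 0 0 a ha0 ha1 ha0 _ (Fmap_inr_val p a ⟨ha0, ha1⟩) ?_
    exact (pow_iff' hodd a 0 0 0 a ha0 ha0).mpr (Or.inr ⟨rfl, rfl, rfl, rfl⟩)

private lemma Fmap_inj : Function.Injective (Fmap p) := by
  intro t₁ t₂ h
  have hv := congrArg Units.val h
  rcases t₁ with ⟨⟨a, ha0, ha1⟩, ⟨⟨f, hf0, hfa⟩, c, e⟩⟩ | ⟨a, ha0, ha1⟩ <;>
    rcases t₂ with ⟨⟨a', ha0', ha1'⟩, ⟨⟨f', hf0', hfa'⟩, c', e'⟩⟩ | ⟨a', ha0', ha1'⟩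
  · rw [Fmap_inl_val p a f c e ⟨ha0, ha1⟩ ⟨hf0, hfa⟩,
      Fmap_inl_val p a' f' c' e' ⟨ha0', ha1'⟩ ⟨hf0', hfa'⟩, lit_eq_iff] at hv
    obtain ⟨h1, -, h3, -, -, -, -, h8, h9⟩ := hv
    subst h1; subst h3; subst h8; subst h9
    rfl
  · rw [Fmap_inl_val p a f c e ⟨ha0, ha1⟩ ⟨hf0, hfa⟩,
      Fmap_inr_val p a' ⟨ha0', ha1'⟩, lit_eq_iff] at hv
    obtain ⟨h1, -, -, -, -, -, -, -, h9⟩ := hv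
    exact absurd (h9.trans h1.symm) hfa
  · rw [Fmap_inr_val p a ⟨ha0, ha1⟩,
      Fmap_inl_val p a' f' c' e' ⟨ha0', ha1'⟩ ⟨hf0', hfa'⟩, lit_eq_iff] at hv
    obtain ⟨h1, -, -, -, -, -, -, -, h9⟩ := hv
    exact absurd (h9.symm.trans h1) hfa'
  · rw [Fmap_inr_val p a ⟨ha0, ha1⟩, Fmap_inr_val p a' ⟨ha0', ha1'⟩, lit_eq_iff] at hv
    obtain ⟨h1, -⟩ := hv
    subst h1
    rfl

private lemma Fmap_surj (hodd : p ≠ 2) (x : GL (Fin 3) (ZMod p)) (hx : x ∈ Omega p) :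
    ∃ t : Tpar p, Fmap p t = x := by
  obtain ⟨hcomm, hne1, hpow, hmove⟩ := hx
  set M : Matrix (Fin 3) (Fin 3) (ZMod p) := (x : Matrix (Fin 3) (Fin 3) (ZMod p)) with hM
  have hcommM : M * !![1,1,0;0,1,0;0,0,1] = !![1,1,0;0,1,0;0,0,1] * M := by
    have h := congrArg Units.val hcomm
    rwa [Units.val_mul, Units.val_mul, gOne_coe'] at h
  obtain ⟨h10, h12, h20, h11⟩ := (commute_iff' M).mp hcommM
  have hdet0 : M.det ≠ 0 := ((Matrix.isUnit_iff_isUnit_det _).mp x.isUnit).ne_zero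
  have hdet3 : M.det = M 0 0 * M 0 0 * M 2 2 := by
    rw [Matrix.det_fin_three, h10, h12, h20, h11]
    ring
  have ha0 : M 0 0 ≠ 0 := by
    intro h
    exact hdet0 (by rw [hdet3, h]; ring)
  have hf0 : M 2 2 ≠ 0 := by
    intro h
    exact hdet0 (by rw [hdet3, h]; ring)
  have ha1 : M 0 0 ≠ 1 := by
    intro h1
    have hmv := hmove ![1,0,0] (by norm_num)
    apply hmv
    rw [Pi.sub_apply]
    have hvm : (![1,0,0] ᵥ* M) 0 = M 0 0 := by
      simp [Matrix.vecMul, dotProduct, Fin.sum_univ_three, Matrix.vecHead, Matrix.vecTail]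
    rw [hvm, h1]
    norm_num
  have heta : M = !![M 0 0, M 0 1, M 0 2; 0, M 0 0, 0; 0, M 2 1, M 2 2] := by
    conv_lhs => rw [Matrix.eta_fin_three M]
    rw [h10, h12, h20, h11]
  have hpowM : M ^ (p-1) = 1 := by
    have h := congrArg Units.val hpow
    rwa [Units.val_pow_eq_pow_val, Units.val_one] at h
  rw [heta] at hpowM
  rcases (pow_iff' hodd (M 0 0) (M 0 1) (M 0 2) (M 2 1) (M 2 2) ha0 hf0).mp hpowM with
    ⟨hfa, hbce⟩ | ⟨hfa, hb, hc, he⟩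
  · refine ⟨Sum.inl ⟨⟨M 0 0, ha0, ha1⟩, ⟨⟨M 2 2, hf0, hfa⟩, M 0 2, M 2 1⟩⟩, ?_⟩
    apply Units.ext
    rw [Fmap_inl_val p (M 0 0) (M 2 2) (M 0 2) (M 2 1) ⟨ha0, ha1⟩ ⟨hf0, hfa⟩, ← hM]
    conv_rhs => rw [heta]
    rw [lit_eq_iff]
    refine ⟨rfl, ?_, rfl, rfl, rfl, rfl, rfl, rfl, rfl⟩
    rw [← hbce]
    exact mul_inv_cancel_right₀ (sub_ne_zero.mpr hfa) _
  · refine ⟨Sum.inr ⟨M 0 0, ha0, ha1⟩, ?_⟩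
    apply Units.ext
    rw [Fmap_inr_val p (M 0 0) ⟨ha0, ha1⟩, ← hM]
    conv_rhs => rw [heta]
    rw [lit_eq_iff]
    exact ⟨rfl, hb.symm, hc.symm, rfl, rfl, rfl, rfl, he.symm, hfa.symm⟩

private lemma card_Tpar : Nat.card (Tpar p) = (p-2) * ((p-2) * (p * p)) + (p-2) := by
  haveI : NeZero p := ⟨(Fact.out : p.Prime).ne_zero⟩
  have h01 : (0 : ZMod p) ≠ 1 := zero_ne_one
  have hcardA : Fintype.card {a : ZMod p // a ≠ 0 ∧ a ≠ 1} = p - 2 := card_ne_two' 0 1 h01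
  rw [Nat.card_eq_fintype_card, Fintype.card_sum, Fintype.card_sigma]
  have hfib : ∀ a : {a : ZMod p // a ≠ 0 ∧ a ≠ 1},
      Fintype.card ({f : ZMod p // f ≠ 0 ∧ f ≠ a.1} × ZMod p × ZMod p)
        = (p-2) * (p * p) := by
    intro a
    rw [Fintype.card_prod, Fintype.card_prod, ZMod.card,
      card_ne_two' 0 a.1 (fun h => a.2.1 h.symm)]
  rw [Finset.sum_congr rfl (fun a _ => hfib a), Finset.sum_const, Finset.card_univ, hcardA,
    smul_eq_mul]

end Main

/-- Let p be an odd prime, L = GL(3, F_p) acting on the right on row vectors, and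
W = {(0,a,b)} the subspace of row vectors with first coordinate zero. The set Ω of
elements x of L commuting with g1, different from the identity, of order dividing p − 1,
and moving every affine coset v + W with v ∉ W (i.e. v·x − v ∉ W whenever the first
coordinate of v is nonzero), has cardinality (p − 2)(p − 1)(p² − p − 1). -/
theorem GL3_card_Omega (p : ℕ) [Fact p.Prime] (hodd : p ≠ 2) :
    Nat.card {x : GL (Fin 3) (ZMod p) |
      x * gOne p = gOne p * x ∧
      x ≠ 1 ∧
      x ^ (p - 1) = 1 ∧
      ∀ v : Fin 3 → ZMod p, v 0 ≠ 0 →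
        (v ᵥ* (x : Matrix (Fin 3) (Fin 3) (ZMod p)) - v) 0 ≠ 0} =
      (p - 2) * (p - 1) * (p ^ 2 - p - 1) := by
  have hbij : Function.Bijective
      (fun t : Tpar p => (⟨Fmap p t, Fmap_mem p hodd t⟩ : Omega p)) := by
    constructor
    · intro t₁ t₂ h
      exact Fmap_inj p (congrArg Subtype.val h)
    · rintro ⟨x, hx⟩
      obtain ⟨t, ht⟩ := Fmap_surj p hodd x hx
      exact ⟨t, Subtype.ext ht⟩
  have hcard : Nat.card (Omega p) = (p-2) * ((p-2) * (p * p)) + (p-2) := by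
    rw [← Nat.card_eq_of_bijective _ hbij]
    exact card_Tpar p
  have hp3 : 3 ≤ p := by
    have h2 := (Fact.out : p.Prime).two_le
    omega
  show Nat.card (Omega p) = (p - 2) * (p - 1) * (p ^ 2 - p - 1)
  rw [hcard]
  obtain ⟨k, rfl⟩ : ∃ k, p = k + 3 := ⟨p - 3, by omega⟩
  have h1 : k + 3 - 2 = k + 1 := by omega
  have h2 : k + 3 - 1 = k + 2 := by omega
  have h3 : (k + 3) ^ 2 - (k + 3) - 1 = k*k + 5*k + 5 := by
    have hsq : (k + 3) ^ 2 = k*k + 6*k + 9 := by ring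
    rw [hsq]
    generalize k*k = m
    omega
  rw [h1, h2, h3]
  ring
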